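/- arXiv:2201.00144 — 4 statements merged into one kernel-verified Lean document; each statement's English description precedes it below -/
import Mathlib

section
/- Let Σ: ẋ = f(x) + g(x)u, y = h(x) with f(0)=0, h(0)=0 be smooth. If there exist functions V(x) ≥ 0, L(x), W(x) such that ∇Vᵀf(x) = −Lᵀ(x)L(x), (1/2)gᵀ(x)∇V(x) = (1/2)∇h(x)f(x) − Wᵀ(x)L(x), and Wᵀ(x)W(x) = (1/2)[(∇h(x)g(x))ᵀ + ∇h(x)g(x)], then V̇(x(t)) ≤ ẏᵀ(t)u(t) along all trajectories, i.e. Σ is nonlinear negative imaginary with storage function V. -/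
open Matrix

/-- Nonlinear NI KYP lemma (sufficiency): if `∇Vᵀf = -LᵀL`,
`(1/2)gᵀ∇V = (1/2)∇h f - WᵀL`, and `WᵀW = (1/2)((∇h g)ᵀ + ∇h g)`,
then `V̇ ≤ ẏᵀu` along all trajectories of `ẋ = f(x)+g(x)u`, `y = h(x)`. -/
theorem nni_kyp_sufficiency
    (n m k : ℕ)
    (f : (Fin n → ℝ) → (Fin n → ℝ))
    (g : (Fin n → ℝ) → Matrix (Fin n) (Fin m) ℝ)
    (Jh : (Fin n → ℝ) → Matrix (Fin m) (Fin n) ℝ)  -- Jacobian ∇h(x)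
    (gradV : (Fin n → ℝ) → (Fin n → ℝ))             -- gradient ∇V(x)
    (V : (Fin n → ℝ) → ℝ) (hV : ∀ x, 0 ≤ V x)
    (hf0 : f 0 = 0)
    (L : (Fin n → ℝ) → (Fin k → ℝ))
    (W : (Fin n → ℝ) → Matrix (Fin k) (Fin m) ℝ)
    (h1 : ∀ x, gradV x ⬝ᵥ f x = -(L x ⬝ᵥ L x))
    (h2 : ∀ x, (1/2 : ℝ) • ((g x)ᵀ *ᵥ gradV x)
              = (1/2 : ℝ) • (Jh x *ᵥ f x) - (W x)ᵀ *ᵥ L x)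
    (h3 : ∀ x, (W x)ᵀ * W x = (1/2 : ℝ) • ((Jh x * g x)ᵀ + Jh x * g x)) :
    ∀ (x : Fin n → ℝ) (u : Fin m → ℝ),
      gradV x ⬝ᵥ (f x + g x *ᵥ u) ≤ (Jh x *ᵥ (f x + g x *ᵥ u)) ⬝ᵥ u := by
  intro x u
  set a := L x with ha
  set Wu := W x *ᵥ u with hWu
  -- key square nonnegativity
  have hsq : 0 ≤ (a + Wu) ⬝ᵥ (a + Wu) :=
    Finset.sum_nonneg fun i _ => mul_self_nonneg _
  -- ∇V ⬝ (g u) = (gᵀ ∇V) ⬝ u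
  have e1 : gradV x ⬝ᵥ (g x *ᵥ u) = ((g x)ᵀ *ᵥ gradV x) ⬝ᵥ u := by
    rw [mulVec_transpose, dotProduct_mulVec]
  -- dot h2 with u
  have e2 : ((g x)ᵀ *ᵥ gradV x) ⬝ᵥ u
      = (Jh x *ᵥ f x) ⬝ᵥ u - 2 * (((W x)ᵀ *ᵥ a) ⬝ᵥ u) := by
    have := congrArg (fun v => v ⬝ᵥ u) (h2 x)
    simp only [smul_dotProduct, sub_dotProduct, smul_eq_mul] at this
    linarith
  -- (Wᵀ a) ⬝ u = a ⬝ Wu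
  have e3 : ((W x)ᵀ *ᵥ a) ⬝ᵥ u = a ⬝ᵥ Wu := by
    rw [mulVec_transpose, dotProduct_mulVec]
  -- (Jh (g u)) ⬝ u = Wu ⬝ Wu
  have e4 : (Jh x *ᵥ (g x *ᵥ u)) ⬝ᵥ u = Wu ⬝ᵥ Wu := by
    have h3' := congrArg (fun M => u ⬝ᵥ (M *ᵥ u)) (h3 x)
    simp only [smul_mulVec, add_mulVec, dotProduct_smul, dotProduct_add,
      transpose_mul] at h3' ⊢
    have k1 : u ⬝ᵥ ((W x)ᵀ *ᵥ Wu) = Wu ⬝ᵥ Wu := by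
      rw [dotProduct_mulVec, ← mulVec_transpose, transpose_transpose, dotProduct_comm]
    have k2 : u ⬝ᵥ ((g x)ᵀ *ᵥ ((Jh x)ᵀ *ᵥ u)) = (Jh x *ᵥ (g x *ᵥ u)) ⬝ᵥ u := by
      rw [dotProduct_mulVec, ← mulVec_transpose, transpose_transpose,
        dotProduct_mulVec, ← mulVec_transpose, transpose_transpose]
    have k3 : u ⬝ᵥ (Jh x *ᵥ (g x *ᵥ u)) = (Jh x *ᵥ (g x *ᵥ u)) ⬝ᵥ u :=
      dotProduct_comm _ _
    simp only [← mulVec_mulVec] at h3'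
    rw [k1, k2, k3, smul_eq_mul] at h3'
    linarith
  have h1' := h1 x
  have hexp : (a + Wu) ⬝ᵥ (a + Wu) = a ⬝ᵥ a + 2 * (a ⬝ᵥ Wu) + Wu ⬝ᵥ Wu := by
    rw [add_dotProduct, dotProduct_add, dotProduct_add, dotProduct_comm Wu a]
    ring
  simp only [dotProduct_add, mulVec_add, add_dotProduct]
  rw [e1, e2, e3, e4]
  rw [hexp] at hsq
  linarith
end

section
/- Conversely, if the input-affine system ẋ = f(x) + g(x)u, y = h(x) satisfies the NNI dissipation inequality ∇Vᵀ(x)(f(x)+g(x)u) ≤ (∇h(x)(f(x)+g(x)u))ᵀu for all x and u, with C¹ storage function V ≥ 0, and the quadratic-in-u nonnegative expression admits a factorization (L(x)+W(x)u)ᵀ(L(x)+W(x)u), then the functions L, W satisfy ∇Vᵀf = −LᵀL, (1/2)gᵀ∇V = (1/2)∇h·f − WᵀL, and WᵀW = (1/2)[(∇h·g)ᵀ + ∇h·g]. -/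
open Matrix

private lemma dot_mulVec_single {n m : ℕ} (M : Matrix (Fin n) (Fin m) ℝ)
    (v : Fin n → ℝ) (i : Fin m) :
    v ⬝ᵥ (M *ᵥ Pi.single i 1) = (Mᵀ *ᵥ v) i := by
  simp [Matrix.mulVec, dotProduct, Pi.single_apply, mul_comm]

/-- Nonlinear NI KYP lemma (necessity direction): if the NNI dissipation
inequality holds and the nonnegative quadratic-in-`u` expression admits the
factorization `(L(x)+W(x)u)ᵀ(L(x)+W(x)u)`, then `L`, `W` satisfy the three
KYP identities. -/
theorem nni_kyp_necessity
    (n m k : ℕ)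
    (f : (Fin n → ℝ) → (Fin n → ℝ))
    (g : (Fin n → ℝ) → Matrix (Fin n) (Fin m) ℝ)
    (Jh : (Fin n → ℝ) → Matrix (Fin m) (Fin n) ℝ)
    (gradV : (Fin n → ℝ) → (Fin n → ℝ))
    (V : (Fin n → ℝ) → ℝ) (hV : ∀ x, 0 ≤ V x)
    (hf0 : f 0 = 0)
    (L : (Fin n → ℝ) → (Fin k → ℝ))
    (W : (Fin n → ℝ) → Matrix (Fin k) (Fin m) ℝ)
    -- NNI dissipation inequality
    (hdiss : ∀ (x : Fin n → ℝ) (u : Fin m → ℝ),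
      gradV x ⬝ᵥ (f x + g x *ᵥ u) ≤ (Jh x *ᵥ (f x + g x *ᵥ u)) ⬝ᵥ u)
    -- factorization of the nonnegative quadratic form in u
    (hfact : ∀ (x : Fin n → ℝ) (u : Fin m → ℝ),
      (Jh x *ᵥ (f x + g x *ᵥ u)) ⬝ᵥ u - gradV x ⬝ᵥ (f x + g x *ᵥ u)
        = (L x + W x *ᵥ u) ⬝ᵥ (L x + W x *ᵥ u)) :
    (∀ x, gradV x ⬝ᵥ f x = -(L x ⬝ᵥ L x)) ∧
    (∀ x, (1/2 : ℝ) • ((g x)ᵀ *ᵥ gradV x)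
        = (1/2 : ℝ) • (Jh x *ᵥ f x) - (W x)ᵀ *ᵥ L x) ∧
    (∀ x, (W x)ᵀ * W x = (1/2 : ℝ) • ((Jh x * g x)ᵀ + Jh x * g x)) := by
  have h0 : ∀ x, gradV x ⬝ᵥ f x = -(L x ⬝ᵥ L x) := by
    intro x
    have h := hfact x 0
    simp at h
    linarith
  have key : ∀ x u, (Jh x *ᵥ f x) ⬝ᵥ u + ((Jh x * g x) *ᵥ u) ⬝ᵥ u
      - gradV x ⬝ᵥ f x - gradV x ⬝ᵥ (g x *ᵥ u)
      = L x ⬝ᵥ L x + 2 * (L x ⬝ᵥ (W x *ᵥ u)) + (W x *ᵥ u) ⬝ᵥ (W x *ᵥ u) := by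
    intro x u
    have h := hfact x u
    have hc : (W x *ᵥ u) ⬝ᵥ L x = L x ⬝ᵥ (W x *ᵥ u) := dotProduct_comm _ _
    simp [Matrix.mulVec_add, add_dotProduct, dotProduct_add] at h
    linarith
  have lin : ∀ x u, (Jh x *ᵥ f x) ⬝ᵥ u - gradV x ⬝ᵥ (g x *ᵥ u)
      = 2 * (L x ⬝ᵥ (W x *ᵥ u)) := by
    intro x u
    have h1 := key x u
    have h2 := key x (-u)
    simp [Matrix.mulVec_neg, dotProduct_neg, neg_dotProduct] at h2
    linarith
  have quad : ∀ x u, ((Jh x * g x) *ᵥ u) ⬝ᵥ u = (W x *ᵥ u) ⬝ᵥ (W x *ᵥ u) := by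
    intro x u
    have h1 := key x u
    have h2 := lin x u
    have h3 := h0 x
    linarith
  refine ⟨h0, ?_, ?_⟩
  · intro x
    funext i
    have h := lin x (Pi.single i 1)
    rw [dotProduct_single, dot_mulVec_single, dot_mulVec_single] at h
    simp only [Pi.smul_apply, Pi.sub_apply, smul_eq_mul] at *
    linarith
  · intro x
    ext i j
    have sym : ∀ a b : Fin m, ((W x)ᵀ * W x) a b = ((W x)ᵀ * W x) b a := by
      intro a b
      simp [Matrix.mul_apply, mul_comm]
    have ev : ∀ a b : Fin m,
        (W x *ᵥ Pi.single a 1) ⬝ᵥ (W x *ᵥ Pi.single b 1) = ((W x)ᵀ * W x) a b := by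
      intro a b
      simp [Matrix.mulVec_single, dotProduct, Matrix.mul_apply]
    have evA : ∀ a b : Fin m,
        ((Jh x * g x) *ᵥ Pi.single a 1) ⬝ᵥ Pi.single b 1 = (Jh x * g x) b a := by
      intro a b
      rw [dotProduct_single, mul_one, Matrix.mulVec_single]
      simp
    have q1 := quad x (Pi.single i 1)
    have q2 := quad x (Pi.single j 1)
    have q3 := quad x (Pi.single i 1 + Pi.single j 1)
    rw [ev i i, evA i i] at q1
    rw [ev j j, evA j j] at q2
    simp only [Matrix.mulVec_add, add_dotProduct, dotProduct_add] at q3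
    rw [ev i i, ev i j, ev j i, ev j j, evA i i, evA i j, evA j i, evA j j] at q3
    rw [q1, q2] at q3
    have hs := sym i j
    simp only [Pi.smul_apply, Matrix.smul_apply, Matrix.add_apply,
      Matrix.transpose_apply, smul_eq_mul]
    linarith
end

section
/- If systems H₁ and H₂ are both nonlinear negative imaginary with storage functions V₁ and V₂, then their positive feedback interconnection u₁ = y₂ + r₁, u₂ = y₁ with external input r₁ = 0 satisfies d/dt[V₁(x₁) + V₂(x₂) − y₁ᵀy₂] ≤ 0 along trajectories (where y₁ᵀy₂ accounts for the internal power exchange). -/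
open Matrix

/-- Positive feedback interconnection of two NNI systems (`u₁ = y₂`, `u₂ = y₁`,
external input `r₁ = 0`): the function `V₁ + V₂ - y₁ᵀy₂` is nonincreasing,
i.e. its time derivative along trajectories is `≤ 0`. -/
theorem nni_feedback_interconnection
    (m : ℕ)
    (u₁ u₂ y₁ y₂ yd₁ yd₂ : ℝ → (Fin m → ℝ))
    (v₁ v₂ dv₁ dv₂ : ℝ → ℝ)
    (hy₁ : ∀ t, HasDerivAt y₁ (yd₁ t) t)
    (hy₂ : ∀ t, HasDerivAt y₂ (yd₂ t) t)
    (hv₁ : ∀ t, HasDerivAt v₁ (dv₁ t) t)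
    (hv₂ : ∀ t, HasDerivAt v₂ (dv₂ t) t)
    -- NNI property of each subsystem
    (hnni₁ : ∀ t, dv₁ t ≤ yd₁ t ⬝ᵥ u₁ t)
    (hnni₂ : ∀ t, dv₂ t ≤ yd₂ t ⬝ᵥ u₂ t)
    -- positive feedback interconnection with r₁ = 0
    (hfb₁ : ∀ t, u₁ t = y₂ t)
    (hfb₂ : ∀ t, u₂ t = y₁ t) :
    ∀ t, HasDerivAt (fun s => v₁ s + v₂ s - y₁ s ⬝ᵥ y₂ s)
          (dv₁ t + dv₂ t - (yd₁ t ⬝ᵥ y₂ t + y₁ t ⬝ᵥ yd₂ t)) t ∧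
         dv₁ t + dv₂ t - (yd₁ t ⬝ᵥ y₂ t + y₁ t ⬝ᵥ yd₂ t) ≤ 0 := by
  intro t
  constructor
  · have hdot : HasDerivAt (fun s => y₁ s ⬝ᵥ y₂ s)
        (yd₁ t ⬝ᵥ y₂ t + y₁ t ⬝ᵥ yd₂ t) t := by
      have : HasDerivAt (fun s => ∑ i, y₁ s i * y₂ s i)
          (∑ i, (yd₁ t i * y₂ t i + y₁ t i * yd₂ t i)) t := by
        apply HasDerivAt.fun_sum
        intro i _
        exact ((hasDerivAt_pi.mp (hy₁ t) i).mul (hasDerivAt_pi.mp (hy₂ t) i))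
      simpa [dotProduct, Finset.sum_add_distrib] using this
    exact ((hv₁ t).add (hv₂ t)).sub hdot
  · have h1 := hnni₁ t
    have h2 := hnni₂ t
    rw [hfb₁ t] at h1
    rw [hfb₂ t] at h2
    have := add_le_add h1 h2
    rw [dotProduct_comm (yd₂ t)] at this
    linarith
end

section
/- Consider the scalar cascade system η̇ = aη + bξ, ξ̇ = u, y = cη with a < 0 and cb > 0. Then V(η,ξ) = (ca²/(2b))η² + ca·ηξ + (cb/2)ξ² is positive semidefinite and satisfies V̇ ≤ c η̇ ξ̇ = ẏ u along trajectories; hence the cascade of a first-order positive real system with an integrator is nonlinear negative imaginary. -/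
/-- Scalar cascade of a first-order positive real system with an integrator:
`η̇ = aη + bξ`, `ξ̇ = u`, `y = cη` with `a < 0`, `cb > 0`. Then
`V(η,ξ) = (ca²/(2b))η² + ca ηξ + (cb/2)ξ²` is positive semidefinite and
`V̇ = (ac/b)η̇² + c η̇ u ≤ c η̇ u = ẏ u` along trajectories. -/
theorem scalar_pr_integrator_cascade_nni
    (a b c : ℝ) (ha : a < 0) (hcb : 0 < c * b)
    (η ξ u : ℝ → ℝ)
    (hη : ∀ t, HasDerivAt η (a * η t + b * ξ t) t)
    (hξ : ∀ t, HasDerivAt ξ (u t) t) :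
    (∀ x z : ℝ, 0 ≤ (c * a^2 / (2 * b)) * x^2 + c * a * x * z + (c * b / 2) * z^2) ∧
    (∀ t, HasDerivAt
        (fun s => (c * a^2 / (2 * b)) * (η s)^2 + c * a * η s * ξ s + (c * b / 2) * (ξ s)^2)
        ((a * c / b) * (a * η t + b * ξ t)^2 + c * (a * η t + b * ξ t) * u t) t) ∧
    (∀ t, (a * c / b) * (a * η t + b * ξ t)^2 + c * (a * η t + b * ξ t) * u t
        ≤ c * (a * η t + b * ξ t) * u t) := by
  have hb : b ≠ 0 := by
    rintro rfl; simp at hcb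
  have hcb' : 0 < c / b := by
    have : c / b = c * b / b ^ 2 := by field_simp
    rw [this]
    positivity
  refine ⟨?_, ?_, ?_⟩
  · intro x z
    have key : (c * a^2 / (2 * b)) * x^2 + c * a * x * z + (c * b / 2) * z^2
        = (c / b) / 2 * (a * x + b * z)^2 := by
      field_simp; ring
    rw [key]; positivity
  · intro t
    have h := (((hη t).pow 2).const_mul (c * a^2 / (2 * b))).add
      ((((hη t).const_mul (c * a)).mul (hξ t)).add (((hξ t).pow 2).const_mul (c * b / 2)))
    convert h using 1
    · rfl
    · rfl
    · ext s; simp only [Pi.add_apply, Pi.mul_apply, Pi.pow_apply]; ring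
    · field_simp; ring
  · intro t
    have : (a * c / b) * (a * η t + b * ξ t)^2 ≤ 0 := by
      have h1 : a * c / b ≤ 0 := by
        have : a * c / b = a * (c / b) := by ring
        rw [this]; exact mul_nonpos_of_nonpos_of_nonneg ha.le hcb'.le
      exact mul_nonpos_of_nonpos_of_nonneg h1 (sq_nonneg _)
    linarith
end
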